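/- Suppose all weights are nonzero (wi ≠ 0 for i = 0,1,2,3), no three of the control points are collinear (λi ≠ 0 for i = 0,1,2,3), and φ1 = 0 and φ2 = 0. Then q2 is a nonzero polynomial of total degree 2, and q2(p(t)) = 0 for every t with w(t) ≠ 0; i.e., q2(x,y) = u0u3·L_{03}(x,y)² − u1u2·L_{01}(x,y)·L_{23}(x,y) = 0 is the implicit representation of the degenerate (conic) curve. -/

import Mathlib

noncomputable section

/-- Determinant of the matrix [[x, y, 1], [a₁, a₂, 1], [b₁, b₂, 1]]. -/
def det3 (x y a₁ a₂ b₁ b₂ : ℝ) : ℝ :=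
  x * (a₂ - b₂) - y * (a₁ - b₁) + (a₁ * b₂ - a₂ * b₁)

/-- L_{ij}(x,y): the implicit linear form of the line through points `p` and `q`. -/
def lineL (p q : ℝ × ℝ) (x y : ℝ) : ℝ := det3 x y p.1 p.2 q.1 q.2

/-- λ_{ijk}: determinant of [[p₁,p₂,1],[q₁,q₂,1],[r₁,r₂,1]]. -/
def lam (p q r : ℝ × ℝ) : ℝ := det3 p.1 p.2 q.1 q.2 r.1 r.2

/-- Gradient of a bivariate function. -/
def grad (f : ℝ → ℝ → ℝ) (x y : ℝ) : ℝ × ℝ :=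
  (deriv (fun s => f s y) x, deriv (fun s => f x s) y)

/-- The line L_{ij} as a polynomial in two variables. -/
def linePoly (p q : ℝ × ℝ) : MvPolynomial (Fin 2) ℝ :=
  MvPolynomial.C (p.2 - q.2) * MvPolynomial.X 0 +
    MvPolynomial.C (q.1 - p.1) * MvPolynomial.X 1 +
    MvPolynomial.C (p.1 * q.2 - p.2 * q.1)

set_option maxHeartbeats 1000000 in
private lemma evalLine_aux (a b : ℝ × ℝ) (x y : ℝ) :
    MvPolynomial.eval ![x, y] (linePoly a b) =
      (a.2 - b.2) * x + (b.1 - a.1) * y + (a.1 * b.2 - a.2 * b.1) := by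
  simp [linePoly]

set_option maxHeartbeats 1600000 in
/-- when `φ₁ = φ₂ = 0`, the polynomial
`q₂ = u₀u₃·L₀₃² − u₁u₂·L₀₁·L₂₃` is a nonzero polynomial of total degree 2 that
vanishes along the curve, i.e. it is the implicit representation of the conic. -/
theorem conic_implicit_representation (c0 c1 c2 c3 : ℝ × ℝ) (w0 w1 w2 w3 : ℝ)
    (hw0 : w0 ≠ 0) (hw1 : w1 ≠ 0) (hw2 : w2 ≠ 0) (hw3 : w3 ≠ 0)
    (u0 u1 u2 u3 : ℝ)
    (hu0 : u0 = w0) (hu1 : u1 = 3 * w1) (hu2 : u2 = 3 * w2) (hu3 : u3 = w3)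
    (l0 l1 l2 l3 : ℝ)
    (hl0 : l0 = lam c3 c2 c1) (hl1 : l1 = lam c2 c3 c0)
    (hl2 : l2 = lam c1 c0 c3) (hl3 : l3 = lam c0 c1 c2)
    (hnc0 : l0 ≠ 0) (hnc1 : l1 ≠ 0) (hnc2 : l2 ≠ 0) (hnc3 : l3 ≠ 0)
    (phi1 phi2 phi3 : ℝ)
    (hphi1 : phi1 = u0 * u2 * l1 ^ 2 - u1 ^ 2 * l0 * l2)
    (hphi2 : phi2 = u1 * u3 * l2 ^ 2 - u2 ^ 2 * l1 * l3)
    (hphi3 : phi3 = u1 * u2 * l0 * l3 - u0 * u3 * l1 * l2)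
    (hphi1 : phi1 = 0) (hphi2 : phi2 = 0)
    (w : ℝ → ℝ) (p : ℝ → ℝ × ℝ)
    (hw : ∀ t, w t = u0 * (1 - t) ^ 3 + u1 * (t * (1 - t) ^ 2) + u2 * (t ^ 2 * (1 - t)) + u3 * t ^ 3)
    (hp : ∀ t, w t ≠ 0 → p t = (w t)⁻¹ •
      ((u0 * (1 - t) ^ 3) • c0 + (u1 * (t * (1 - t) ^ 2)) • c1 +
        (u2 * (t ^ 2 * (1 - t))) • c2 + (u3 * t ^ 3) • c3))
    (Q2 : MvPolynomial (Fin 2) ℝ)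
    (hQ2 : Q2 = MvPolynomial.C (u0 * u3) * (linePoly c0 c3) ^ 2 -
      MvPolynomial.C (u1 * u2) * (linePoly c0 c1 * linePoly c2 c3)) :
    Q2 ≠ 0 ∧ Q2.totalDegree = 2 ∧
      ∀ t, w t ≠ 0 → MvPolynomial.eval ![(p t).1, (p t).2] Q2 = 0 := by
  have hu0n : u0 ≠ 0 := by rw [hu0]; exact hw0
  have hu1n : u1 ≠ 0 := by rw [hu1]; exact mul_ne_zero three_ne_zero hw1
  have hu2n : u2 ≠ 0 := by rw [hu2]; exact mul_ne_zero three_ne_zero hw2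
  have hu3n : u3 ≠ 0 := by rw [hu3]; exact hw3
  have e1 : u0 * u2 * l1 ^ 2 - u1 ^ 2 * l0 * l2 = 0 := by
    have h : phi1 = u0 * u2 * l1 ^ 2 - u1 ^ 2 * l0 * l2 := by assumption
    rw [← h]; exact hphi1
  have e2 : u1 * u3 * l2 ^ 2 - u2 ^ 2 * l1 * l3 = 0 := by
    have h : phi2 = u1 * u3 * l2 ^ 2 - u2 ^ 2 * l1 * l3 := by assumption
    rw [← h]; exact hphi2
  have e3 : u1 * u2 * l0 * l3 - u0 * u3 * l1 * l2 = 0 := by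
    have key : (u1 * l2) * (u1 * u2 * l0 * l3 - u0 * u3 * l1 * l2) = 0 := by
      linear_combination (-(u2 * l3)) * e1 - u0 * l1 * e2
    rcases mul_eq_zero.mp key with h | h
    · exact absurd h (mul_ne_zero hu1n hnc2)
    · exact h
  -- substitution polynomial along the line through c1 with direction c1 - c0
  set f : Fin 2 → Polynomial ℝ :=
    ![Polynomial.C c1.1 + Polynomial.C (c1.1 - c0.1) * Polynomial.X,
      Polynomial.C c1.2 + Polynomial.C (c1.2 - c0.2) * Polynomial.X] with hf
  have h01 : MvPolynomial.aeval f (linePoly c0 c1) = 0 := by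
    simp only [linePoly, map_add, map_mul, map_sub, MvPolynomial.aeval_X, MvPolynomial.aeval_C,
      Polynomial.algebraMap_eq, hf, Matrix.cons_val_zero, Matrix.cons_val_one, Matrix.head_cons]
    ring
  have h03 : MvPolynomial.aeval f (linePoly c0 c3) =
      Polynomial.C l2 * (1 + Polynomial.X) := by
    rw [hl2]
    simp only [linePoly, lam, det3, map_add, map_mul, map_sub, MvPolynomial.aeval_X,
      MvPolynomial.aeval_C, Polynomial.algebraMap_eq, hf, Matrix.cons_val_zero,
      Matrix.cons_val_one, Matrix.head_cons]
    ring
  have hQl : MvPolynomial.aeval f Q2 =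
      Polynomial.C (u0 * u3 * l2 ^ 2) * (1 + Polynomial.X) ^ 2 := by
    rw [hQ2]
    simp only [map_sub, map_mul, map_pow, h01, h03, MvPolynomial.aeval_C,
      Polynomial.algebraMap_eq]
    ring
  have hndeg : (MvPolynomial.aeval f Q2).natDegree = 2 := by
    rw [hQl]
    have hc : u0 * u3 * l2 ^ 2 ≠ 0 :=
      mul_ne_zero (mul_ne_zero hu0n hu3n) (pow_ne_zero 2 hnc2)
    rw [Polynomial.natDegree_C_mul hc,
      show (1 + Polynomial.X : Polynomial ℝ) = Polynomial.X + Polynomial.C 1 by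
        rw [Polynomial.C_1]; ring,
      Polynomial.natDegree_pow, Polynomial.natDegree_X_add_C]
  have hfdeg : ∀ i, (f i).natDegree ≤ 1 := by
    have key : ∀ a b : ℝ, (Polynomial.C a + Polynomial.C b * Polynomial.X).natDegree ≤ 1 := by
      intro a b
      refine (Polynomial.natDegree_add_le _ _).trans ?_
      simp only [Polynomial.natDegree_C, max_le_iff]
      exact ⟨Nat.zero_le 1, (Polynomial.natDegree_C_mul_le _ _).trans Polynomial.natDegree_X_le⟩
    intro i
    fin_cases i
    · simp only [hf, Fin.isValue, Matrix.cons_val_zero]; exact key _ _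
    · simp only [hf, Fin.isValue, Matrix.cons_val_one, Matrix.head_cons]; exact key _ _
  have hL : ∀ a b : ℝ × ℝ, (linePoly a b).totalDegree ≤ 1 := by
    intro a b
    refine (MvPolynomial.totalDegree_add _ _).trans (max_le ?_ ?_)
    · refine (MvPolynomial.totalDegree_add _ _).trans (max_le ?_ ?_)
      · refine (MvPolynomial.totalDegree_mul _ _).trans ?_
        rw [MvPolynomial.totalDegree_C, MvPolynomial.totalDegree_X]
      · refine (MvPolynomial.totalDegree_mul _ _).trans ?_
        rw [MvPolynomial.totalDegree_C, MvPolynomial.totalDegree_X]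
    · rw [MvPolynomial.totalDegree_C]
      omega
  have hub : Q2.totalDegree ≤ 2 := by
    rw [hQ2]
    refine (MvPolynomial.totalDegree_sub _ _).trans (max_le ?_ ?_)
    · refine (MvPolynomial.totalDegree_mul _ _).trans ?_
      rw [MvPolynomial.totalDegree_C, zero_add]
      exact (MvPolynomial.totalDegree_pow _ 2).trans (by have := hL c0 c3; omega)
    · refine (MvPolynomial.totalDegree_mul _ _).trans ?_
      rw [MvPolynomial.totalDegree_C, zero_add]
      refine (MvPolynomial.totalDegree_mul _ _).trans ?_
      have h1 := hL c0 c1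
      have h2 := hL c2 c3
      omega
  have hlb : ¬ Q2.totalDegree ≤ 1 := by
    intro h
    have := MvPolynomial.aeval_natDegree_le Q2 h f hfdeg
    rw [hndeg] at this
    omega
  have hdeg : Q2.totalDegree = 2 := le_antisymm hub (by omega)
  refine ⟨?_, hdeg, ?_⟩
  · intro h
    rw [h, MvPolynomial.totalDegree_zero] at hdeg
    exact two_ne_zero hdeg.symm
  · intro t ht
    have hx : (p t).1 = (w t)⁻¹ * (u0 * (1 - t) ^ 3 * c0.1 + u1 * (t * (1 - t) ^ 2) * c1.1 +
        u2 * (t ^ 2 * (1 - t)) * c2.1 + u3 * t ^ 3 * c3.1) := by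
      rw [hp t ht]
      simp only [Prod.smul_fst, Prod.fst_add, smul_eq_mul]
    have hy : (p t).2 = (w t)⁻¹ * (u0 * (1 - t) ^ 3 * c0.2 + u1 * (t * (1 - t) ^ 2) * c1.2 +
        u2 * (t ^ 2 * (1 - t)) * c2.2 + u3 * t ^ 3 * c3.2) := by
      rw [hp t ht]
      simp only [Prod.smul_snd, Prod.snd_add, smul_eq_mul]
    have hwt := hw t
    rw [hQ2]
    simp only [map_sub, map_mul, map_pow, MvPolynomial.eval_C, evalLine_aux]
    rw [hx, hy]
    have hS1 : (c0.2 - c3.2) * ((w t)⁻¹ * (u0 * (1 - t) ^ 3 * c0.1 +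
          u1 * (t * (1 - t) ^ 2) * c1.1 + u2 * (t ^ 2 * (1 - t)) * c2.1 + u3 * t ^ 3 * c3.1)) +
        (c3.1 - c0.1) * ((w t)⁻¹ * (u0 * (1 - t) ^ 3 * c0.2 +
          u1 * (t * (1 - t) ^ 2) * c1.2 + u2 * (t ^ 2 * (1 - t)) * c2.2 + u3 * t ^ 3 * c3.2)) +
        (c0.1 * c3.2 - c0.2 * c3.1) =
        (w t)⁻¹ * (u1 * (t * (1 - t) ^ 2) * l2 - u2 * (t ^ 2 * (1 - t)) * l1) := by
      rw [hl2, hl1]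
      simp only [lam, det3]
      field_simp
      rw [hwt]
      ring
    have hS2 : (c0.2 - c1.2) * ((w t)⁻¹ * (u0 * (1 - t) ^ 3 * c0.1 +
          u1 * (t * (1 - t) ^ 2) * c1.1 + u2 * (t ^ 2 * (1 - t)) * c2.1 + u3 * t ^ 3 * c3.1)) +
        (c1.1 - c0.1) * ((w t)⁻¹ * (u0 * (1 - t) ^ 3 * c0.2 +
          u1 * (t * (1 - t) ^ 2) * c1.2 + u2 * (t ^ 2 * (1 - t)) * c2.2 + u3 * t ^ 3 * c3.2)) +
        (c0.1 * c1.2 - c0.2 * c1.1) =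
        (w t)⁻¹ * (u2 * (t ^ 2 * (1 - t)) * l3 - u3 * t ^ 3 * l2) := by
      rw [hl3, hl2]
      simp only [lam, det3]
      field_simp
      rw [hwt]
      ring
    have hS3 : (c2.2 - c3.2) * ((w t)⁻¹ * (u0 * (1 - t) ^ 3 * c0.1 +
          u1 * (t * (1 - t) ^ 2) * c1.1 + u2 * (t ^ 2 * (1 - t)) * c2.1 + u3 * t ^ 3 * c3.1)) +
        (c3.1 - c2.1) * ((w t)⁻¹ * (u0 * (1 - t) ^ 3 * c0.2 +
          u1 * (t * (1 - t) ^ 2) * c1.2 + u2 * (t ^ 2 * (1 - t)) * c2.2 + u3 * t ^ 3 * c3.2)) +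
        (c2.1 * c3.2 - c2.2 * c3.1) =
        (w t)⁻¹ * (u0 * (1 - t) ^ 3 * l1 - u1 * (t * (1 - t) ^ 2) * l0) := by
      rw [hl1, hl0]
      simp only [lam, det3]
      field_simp
      rw [hwt]
      ring
    rw [hS1, hS2, hS3]
    field_simp
    linear_combination (u2 * u3 * t ^ 4 * (1 - t) ^ 2) * e1 +
      (u0 * u1 * t ^ 2 * (1 - t) ^ 4) * e2 +
      (u1 * u2 * t ^ 3 * (1 - t) ^ 3) * e3
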